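/- For every gain graph (Γ,ψ) there exists a G-phase H of Γ with Ψ(H) = ψ (i.e., the map Ψ : ℋ_Γ → G(Γ) is surjective). In particular, every gain graph (Γ,ψ) admits a line graph: there exists ζ ∈ G(L(Γ)), namely ζ = Ψ_L(H), such that (L(Γ),ζ) is a line graph of (Γ,ψ). -/

import Mathlib

open SimpleGraph

/-- `ψ` is a gain function on `Γ`: on adjacent ordered pairs, reversing the
orientation inverts the gain. -/
def IsGainFun {V G : Type} [Group G] (Γ : SimpleGraph V) (ψ : V → V → G) : Prop :=
  ∀ ⦃u v : V⦄, Γ.Adj u v → ψ v u = (ψ u v)⁻¹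

/-- Two gain functions on `Γ` are switching equivalent. -/
def SwitchingEquiv {V G : Type} [Group G] (Γ : SimpleGraph V) (ψ₁ ψ₂ : V → V → G) : Prop :=
  ∃ f : V → G, ∀ ⦃u v : V⦄, Γ.Adj u v → ψ₂ u v = (f u)⁻¹ * ψ₁ u v * f v

/-- A `G`-phase of `Γ`: a choice of a group element for every incident
(vertex, edge) pair (the non-incident entries of the phase matrix are `0`,
so they carry no data). -/
def GPhase {V : Type} (Γ : SimpleGraph V) (G : Type) : Type :=
  ∀ (v : V) (e : Γ.edgeSet), v ∈ (e : Sym2 V) → G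

/-- `Ψ(H) = ψ`: the gain function associated with the phase `H` (with parameter `s₁`)
is `ψ`, i.e. `ψ(u,v) = s₁ · H(u,e) · H(v,e)⁻¹` for `e = {u,v}`. -/
def PsiEq {V G : Type} [Group G] {Γ : SimpleGraph V} (s₁ : G) (H : GPhase Γ G)
    (ψ : V → V → G) : Prop :=
  ∀ ⦃u v : V⦄ (h : Γ.Adj u v),
    ψ u v = s₁ * H u ⟨s(u, v), h⟩ (Sym2.mem_mk_left u v)
      * (H v ⟨s(u, v), h⟩ (Sym2.mem_mk_right u v))⁻¹

/-- `Ψ_L(H) = ζ`: the gain function on the line graph associated with the phase `H`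
(with parameter `s`) is `ζ`, i.e. `ζ(e_p,e_q) = s · H(w,e_p)⁻¹ · H(w,e_q)` whenever
`w` is a common endpoint of the distinct edges `e_p, e_q`. -/
def PsiLEq {V G : Type} [Group G] {Γ : SimpleGraph V} (s : G) (H : GPhase Γ G)
    (ζ : Γ.edgeSet → Γ.edgeSet → G) : Prop :=
  ∀ (p q : Γ.edgeSet) (w : V) (hp : w ∈ (p : Sym2 V)) (hq : w ∈ (q : Sym2 V)), p ≠ q →
    ζ p q = s * (H w p hp)⁻¹ * H w q hq

/-- `(L, ζ)` is a gain-line graph (with parameter `s`): there are a graph `Γ`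
with `L = L(Γ)` (up to isomorphism) and a `G`-phase `H` of `Γ` with `Ψ_L(H) = ζ`. -/
def IsGainLine {VL G : Type} [Group G] (s : G) (L : SimpleGraph VL) (ζ : VL → VL → G) : Prop :=
  ∃ (V' : Type) (Γ : SimpleGraph V') (φ : L ≃g Γ.lineGraph) (H : GPhase Γ G),
    PsiLEq s H fun p q => ζ (φ.symm p) (φ.symm q)
/-- The map `Ψ : ℋ_Γ → G(Γ)` is surjective: every gain graph `(Γ, ψ)` is `Ψ(H)` for
some `G`-phase `H`; in particular every gain graph admits a line graph `(L(Γ), ζ)`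
with `ζ = Ψ_L(H)`. -/
theorem psi_surjective
    {V G : Type} [Group G] [Fintype V] (Γ : SimpleGraph V) (hE : Γ.edgeSet.Nonempty)
    (s₁ s₂ : G) (hs₁ : s₁ * s₁ = 1) (hsc₁ : ∀ g : G, s₁ * g = g * s₁)
    (hs₂ : s₂ * s₂ = 1) (hsc₂ : ∀ g : G, s₂ * g = g * s₂)
    (ψ : V → V → G) (hψ : IsGainFun Γ ψ) :
    ∃ H : GPhase Γ G, PsiEq s₁ H ψ ∧
      ∃ ζ : Γ.edgeSet → Γ.edgeSet → G, PsiLEq s₂ H ζ := by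
  classical
  have hs₁' : s₁⁻¹ = s₁ := by
    rw [inv_eq_iff_mul_eq_one]; exact hs₁
  set H : GPhase Γ G := fun v e _ =>
    if v = (e : Sym2 V).out.1 then s₁ * ψ (e : Sym2 V).out.1 (e : Sym2 V).out.2 else 1
    with hH
  refine ⟨H, ?_, ?_⟩
  · intro u v h
    have hne : u ≠ v := h.ne
    have hout : s(((s(u, v) : Sym2 V)).out.1, ((s(u, v) : Sym2 V)).out.2) = s(u, v) := by
      exact Quot.out_eq _
    rcases Sym2.eq_iff.mp hout with ⟨ha, hb⟩ | ⟨ha, hb⟩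
    · have h1 : H u ⟨s(u, v), h⟩ (Sym2.mem_mk_left u v) = s₁ * ψ u v := by
        simp only [hH, ha, hb, if_pos rfl, if_true]
      have h2 : H v ⟨s(u, v), h⟩ (Sym2.mem_mk_right u v) = 1 := by
        simp only [hH, ha]
        rw [if_neg (fun hv => hne hv.symm)]
      rw [h1, h2, inv_one, mul_one, ← mul_assoc, hs₁, one_mul]
    · have h1 : H u ⟨s(u, v), h⟩ (Sym2.mem_mk_left u v) = 1 := by
        simp only [hH, ha]
        rw [if_neg hne]
      have h2 : H v ⟨s(u, v), h⟩ (Sym2.mem_mk_right u v) = s₁ * ψ v u := by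
        simp only [hH, ha, hb, if_pos rfl, if_true]
      rw [h1, h2, mul_one, mul_inv_rev, hψ h, inv_inv, hs₁', hsc₁, mul_assoc, hs₁, mul_one]
  · refine ⟨fun p q =>
      if h : ∃ w, w ∈ (p : Sym2 V) ∧ w ∈ (q : Sym2 V) then
        s₂ * (H h.choose p h.choose_spec.1)⁻¹ * H h.choose q h.choose_spec.2
      else 1, ?_⟩
    intro p q w hp hq hpq
    have hex : ∃ w, w ∈ (p : Sym2 V) ∧ w ∈ (q : Sym2 V) := ⟨w, hp, hq⟩
    have hwu : hex.choose = w := by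
      by_contra hne
      have h1 : (p : Sym2 V) = s(hex.choose, w) :=
        (Sym2.mem_and_mem_iff hne).mp ⟨hex.choose_spec.1, hp⟩
      have h2 : (q : Sym2 V) = s(hex.choose, w) :=
        (Sym2.mem_and_mem_iff hne).mp ⟨hex.choose_spec.2, hq⟩
      exact hpq (Subtype.ext (h1.trans h2.symm))
    simp only [dif_pos hex]
    subst hwu
    rfl
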